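/- arXiv:1203.1738 — 2 statements merged into one kernel-verified Lean document; each statement's English description precedes it below -/
import Mathlib

section
/- Let n, m ≥ 1 and let H₀, H₁, …, H_m : ℝ^{2n+1} → ℝ be continuously differentiable functions of z = (x, p, u) ∈ ℝⁿ × ℝⁿ × ℝ such that each H_i (1 ≤ i ≤ m) is a first integral of the characteristic field Z₀(z) = T(p) ∇H₀(z), i.e. ⟨∇H_i(z), T(p) ∇H₀(z)⟩ = 0 for all z ∈ ℝ^{2n+1}. Set Z_i(z) = T(p) ∇H_i(z), and for each i let g_i : ℝ × ℝ^{2n+1} → ℝ^{2n+1} be a flow of Z_i (g_i(0, y) = y and ∂_t g_i(t, y) = Z_i(g_i(t, y))). Then for every z₀ ∈ ℝ^{2n+1}, the map ẑ(λ, z₀) = g₁(t₁, g₂(t₂, …, g_m(t_m, z₀)…)), λ = (t₁, …, t_m) ∈ ℝ^m, is a parameterized stationary solution of the first-order PDE H₀(z) = H₀(z₀): it satisfies ẑ(0, z₀) = z₀ and H₀(ẑ(λ, z₀)) = H₀(z₀) for all λ ∈ ℝ^m. -/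
open Matrix

/-- Index type for `ℝ^{2n+1} ≅ ℝⁿ × ℝⁿ × ℝ`: the first `Fin n` indexes the
`x`-block, the second `Fin n` indexes the `p`-block and `Unit` indexes `u`. -/
abbrev Idx (n : ℕ) := Fin n ⊕ (Fin n ⊕ Unit)

/-- The `(2n+1) × (2n+1)` matrix `T(p)` with block form
`[[0ₙ, Iₙ, 0], [−Iₙ, 0ₙ, −p], [0ᵀ, pᵀ, 0]]`. -/
def Tmat (n : ℕ) (p : Fin n → ℝ) : Matrix (Idx n) (Idx n) ℝ :=
  fun i j =>
    match i, j with
    | Sum.inl a, Sum.inr (Sum.inl b) => if a = b then 1 else 0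
    | Sum.inr (Sum.inl a), Sum.inl b => if a = b then -1 else 0
    | Sum.inr (Sum.inl a), Sum.inr (Sum.inr _) => -p a
    | Sum.inr (Sum.inr _), Sum.inr (Sum.inl b) => p b
    | _, _ => 0

/-- The full gradient `∇H(z)` of a scalar function on a finite-dimensional
coordinate space, given componentwise by directional derivatives along the
standard basis. -/
noncomputable def grad {ι : Type*} [Fintype ι] [DecidableEq ι]
    (H : (ι → ℝ) → ℝ) (z : ι → ℝ) : ι → ℝ :=
  fun i => fderiv ℝ H z (Pi.single i 1)

/-- The `p`-component of `z = (x, p, u) ∈ ℝ^{2n+1}`. -/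
def pcomp {n : ℕ} (z : Idx n → ℝ) : Fin n → ℝ := fun a => z (Sum.inr (Sum.inl a))

/-- The composed orbit `ẑ(λ, z₀) = g₁(t₁, g₂(t₂, …, g_m(t_m, z₀)…))` of the
flows `g₁, …, g_m` starting from `z₀`, where `λ = (t₁, …, t_m)`. -/
def orbit {V : Type*} {m : ℕ} (g : Fin m → ℝ → V → V)
    (l : Fin m → ℝ) (z₀ : V) : V :=
  (List.ofFn fun i : Fin m => g i (l i)).foldr (fun φ z => φ z) z₀

/-- The full derivative applied to a vector is the dot product with the gradient. -/
lemma fderiv_eq_dot {ι : Type*} [Fintype ι] [DecidableEq ι]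
    (H : (ι → ℝ) → ℝ) (z v : ι → ℝ) :
    fderiv ℝ H z v = v ⬝ᵥ grad H z := by
  have hv : v = ∑ i, v i • (Pi.single i 1 : ι → ℝ) := by
    funext j
    simp [Pi.single_apply, Finset.sum_ite_eq]
  conv_lhs => rw [hv]
  rw [map_sum]
  simp [grad, dotProduct, mul_comm]

lemma Tmat_transpose (n : ℕ) (p : Fin n → ℝ) : (Tmat n p)ᵀ = -Tmat n p := by
  ext i j
  rcases i with a | a | a <;> rcases j with b | b | b <;>
    simp [Tmat, Matrix.transpose_apply, eq_comm]
  all_goals split <;> simp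

/-- Antisymmetry of the pairing defined by `Tmat`. -/
lemma Tmat_antisym (n : ℕ) (p : Fin n → ℝ) (u w : Idx n → ℝ) :
    u ⬝ᵥ (Tmat n p) *ᵥ w = -(w ⬝ᵥ (Tmat n p) *ᵥ u) := by
  rw [Matrix.dotProduct_mulVec, ← Matrix.mulVec_transpose, Tmat_transpose]
  simp [Matrix.neg_mulVec, dotProduct_comm]

/-- Unfolding of `orbit` over a successor index. -/
lemma orbit_succ {V : Type*} {m : ℕ} (g : Fin (m + 1) → ℝ → V → V)
    (l : Fin (m + 1) → ℝ) (z₀ : V) :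
    orbit g l z₀ = g 0 (l 0) (orbit (fun i => g i.succ) (fun i => l i.succ) z₀) := by
  simp [orbit, List.ofFn_succ]

/-- A function invariant under each flow is invariant under the composed orbit. -/
lemma orbit_invariant {V : Type*} (F : V → ℝ) :
    ∀ {m : ℕ} (g : Fin m → ℝ → V → V),
      (∀ i t y, F (g i t y) = F y) → ∀ (l : Fin m → ℝ) (z₀ : V),
        F (orbit g l z₀) = F z₀ := by
  intro m
  induction m with
  | zero => intro g _ l z₀; simp [orbit]
  | succ m ih =>
      intro g hg l z₀
      rw [orbit_succ, hg, ih (fun i => g i.succ) (fun i t y => hg i.succ t y)]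

/-- The orbit at parameter zero is the identity. -/
lemma orbit_zero {V : Type*} :
    ∀ {m : ℕ} (g : Fin m → ℝ → V → V),
      (∀ i y, g i 0 y = y) → ∀ z₀ : V, orbit g (fun _ => 0) z₀ = z₀ := by
  intro m
  induction m with
  | zero => intro g _ z₀; simp [orbit]
  | succ m ih =>
      intro g hg z₀
      rw [orbit_succ, ih (fun i => g i.succ) (fun i y => hg i.succ y), hg]

/-- let `H₀, H₁, …, H_m : ℝ^{2n+1} → ℝ` be continuously
differentiable functions of `z = (x, p, u)` with each `Hᵢ` (`1 ≤ i ≤ m`) a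
first integral of the characteristic field `Z₀(z) = T(p) ∇H₀(z)`, i.e.
`⟨∇Hᵢ(z), T(p) ∇H₀(z)⟩ = 0` for all `z`. Set `Zᵢ(z) = T(p) ∇Hᵢ(z)` and let
`gᵢ` be a flow of `Zᵢ`. Then for every `z₀ ∈ ℝ^{2n+1}` the map
`ẑ(λ, z₀) = g₁(t₁, g₂(t₂, …, g_m(t_m, z₀)…))`, `λ = (t₁, …, t_m) ∈ ℝ^m`, is a
parameterized stationary solution of the first-order PDE `H₀(z) = H₀(z₀)`:
it satisfies `ẑ(0, z₀) = z₀` and `H₀(ẑ(λ, z₀)) = H₀(z₀)` for all `λ ∈ ℝ^m`. -/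
theorem parameterized_stationary_solution
    (n m : ℕ) (hn : 1 ≤ n) (hm : 1 ≤ m)
    (H₀ : (Idx n → ℝ) → ℝ) (hH₀ : ContDiff ℝ 1 H₀)
    (H : Fin m → (Idx n → ℝ) → ℝ) (hH : ∀ i, ContDiff ℝ 1 (H i))
    (hint : ∀ i (z : Idx n → ℝ),
      grad (H i) z ⬝ᵥ (Tmat n (pcomp z)) *ᵥ grad H₀ z = 0)
    (g : Fin m → ℝ → (Idx n → ℝ) → Idx n → ℝ)
    (hg0 : ∀ i y, g i 0 y = y)
    (hgflow : ∀ i t y,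
      HasDerivAt (fun s => g i s y)
        ((Tmat n (pcomp (g i t y))) *ᵥ grad (H i) (g i t y)) t)
    (z₀ : Idx n → ℝ) :
    orbit g (fun _ => 0) z₀ = z₀
      ∧ ∀ l : Fin m → ℝ, H₀ (orbit g l z₀) = H₀ z₀ := by
  -- Invariance of `H₀` under each individual flow
  have key : ∀ i t y, H₀ (g i t y) = H₀ y := by
    intro i t y
    have hφ : ∀ s : ℝ, HasDerivAt (fun s => H₀ (g i s y)) 0 s := by
      intro s
      have hd : HasDerivAt (fun s => H₀ (g i s y))
          (fderiv ℝ H₀ (g i s y)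
            ((Tmat n (pcomp (g i s y))) *ᵥ grad (H i) (g i s y))) s :=
        ((hH₀.differentiable one_ne_zero (g i s y)).hasFDerivAt).comp_hasDerivAt s
          (hgflow i s y)
      have hzero : fderiv ℝ H₀ (g i s y)
          ((Tmat n (pcomp (g i s y))) *ᵥ grad (H i) (g i s y)) = 0 := by
        rw [fderiv_eq_dot]
        rw [dotProduct_comm, Tmat_antisym, hint]
        simp
      rwa [hzero] at hd
    have hconst : (fun s => H₀ (g i s y)) t = (fun s => H₀ (g i s y)) 0 :=
      is_const_of_deriv_eq_zero (fun s => (hφ s).differentiableAt)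
        (fun s => (hφ s).deriv) t 0
    simpa [hg0 i y] using hconst
  exact ⟨orbit_zero g hg0 z₀, fun l => orbit_invariant H₀ g key l z₀⟩
end

section
/- Let n, m ≥ 1 and let f₀, f₁, …, f_m : ℝⁿ → ℝⁿ be continuously differentiable vector fields with [f₀, f_i](x) = 0 for all x ∈ ℝⁿ and all i = 1, …, m. Define H₀(x, p) = ⟨p, f₀(x)⟩ and the characteristic fields Z_i(x, p) = ( f_i(x), −(Df_i(x))ᵀ p ) on ℝⁿ × ℝⁿ for i = 1, …, m, and for each i let g_i : ℝ × ℝ^{2n} → ℝ^{2n} be a flow of Z_i (g_i(0, y) = y and ∂_t g_i(t, y) = Z_i(g_i(t, y))). Then for every z₀ = (x₀, p₀) ∈ ℝⁿ × ℝⁿ and every λ = (t₁, …, t_m) ∈ ℝ^m, the composed orbit ẑ(λ, z₀) = g₁(t₁, g₂(t₂, …, g_m(t_m, z₀)…)) satisfies H₀(ẑ(λ, z₀)) = ⟨p₀, f₀(x₀)⟩. -/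
open Matrix

/-- The Lie bracket `[g, h](x) = Dh(x) g(x) − Dg(x) h(x)` of vector fields on
`ℝⁿ`, where `D` denotes the Jacobian (Fréchet derivative). -/
noncomputable def lieB {n : ℕ} (g h : (Fin n → ℝ) → Fin n → ℝ)
    (x : Fin n → ℝ) : Fin n → ℝ :=
  fderiv ℝ h x (g x) - fderiv ℝ g x (h x)

/-- The characteristic field `Z(x, p) = (f(x), −(Df(x))ᵀ p)` on `ℝⁿ × ℝⁿ` of
the function `H(x, p) = ⟨p, f(x)⟩`, where
`(−(Df(x))ᵀ p)ₐ = −∑ b, p_b (Df(x))_{b a}`. -/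
noncomputable def charF {n : ℕ} (f : (Fin n → ℝ) → Fin n → ℝ)
    (z : (Fin n → ℝ) × (Fin n → ℝ)) : (Fin n → ℝ) × (Fin n → ℝ) :=
  (f z.1, fun a => -(∑ b, z.2 b * fderiv ℝ f z.1 (Pi.single a 1) b))

lemma clm_apply_eq_sum_single {n : ℕ} (L : (Fin n → ℝ) →L[ℝ] (Fin n → ℝ))
    (v : Fin n → ℝ) : L v = ∑ b, v b • L (Pi.single b 1) := by
  have hv : v = ∑ b, v b • (Pi.single b 1 : Fin n → ℝ) := by
    funext j
    simp [Finset.sum_apply, Pi.single_apply]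
  conv_lhs => rw [hv]
  simp

lemma H_const_along_flow {n : ℕ} (f₀ fi : (Fin n → ℝ) → Fin n → ℝ)
    (hf₀ : ContDiff ℝ 1 f₀)
    (hcomm : ∀ x, lieB f₀ fi x = 0)
    (γ : ℝ → (Fin n → ℝ) × (Fin n → ℝ))
    (hγ : ∀ t, HasDerivAt γ (charF fi (γ t)) t) (t : ℝ) :
    (γ t).2 ⬝ᵥ f₀ (γ t).1 = (γ 0).2 ⬝ᵥ f₀ (γ 0).1 := by
  have key : ∀ s : ℝ, HasDerivAt (fun u => (γ u).2 ⬝ᵥ f₀ (γ u).1) 0 s := by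
    intro s
    set X : Fin n → ℝ := (γ s).1 with hX
    set P : Fin n → ℝ := (γ s).2 with hP
    have hx : HasDerivAt (fun u => (γ u).1) (fi X) s :=
      (ContinuousLinearMap.fst ℝ (Fin n → ℝ) (Fin n → ℝ)).hasFDerivAt.comp_hasDerivAt s (hγ s)
    have hp : HasDerivAt (fun u => (γ u).2) ((charF fi (γ s)).2) s :=
      (ContinuousLinearMap.snd ℝ (Fin n → ℝ) (Fin n → ℝ)).hasFDerivAt.comp_hasDerivAt s (hγ s)
    have hfx : HasDerivAt (fun u => f₀ ((γ u).1)) (fderiv ℝ f₀ X (fi X)) s :=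
      ((hf₀.differentiable one_ne_zero).differentiableAt.hasFDerivAt).comp_hasDerivAt s hx
    have hterm : ∀ b : Fin n, HasDerivAt (fun u => (γ u).2 b * f₀ ((γ u).1) b)
        ((charF fi (γ s)).2 b * f₀ X b + P b * fderiv ℝ f₀ X (fi X) b) s := by
      intro b
      have hpb : HasDerivAt (fun u => (γ u).2 b) ((charF fi (γ s)).2 b) s :=
        (ContinuousLinearMap.proj (R := ℝ) (φ := fun _ : Fin n => ℝ) b).hasFDerivAt.comp_hasDerivAt s hp
      have hfb : HasDerivAt (fun u => f₀ ((γ u).1) b) (fderiv ℝ f₀ X (fi X) b) s :=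
        (ContinuousLinearMap.proj (R := ℝ) (φ := fun _ : Fin n => ℝ) b).hasFDerivAt.comp_hasDerivAt s hfx
      exact hpb.mul hfb
    have hsum : HasDerivAt (fun u => ∑ b, (γ u).2 b * f₀ ((γ u).1) b)
        (∑ b, ((charF fi (γ s)).2 b * f₀ X b + P b * fderiv ℝ f₀ X (fi X) b)) s :=
      HasDerivAt.fun_sum fun b _ => hterm b
    have hAB : fderiv ℝ fi X (f₀ X) = fderiv ℝ f₀ X (fi X) := by
      have h := hcomm X
      unfold lieB at h
      exact sub_eq_zero.mp h
    have hA : ∀ c, fderiv ℝ fi X (f₀ X) c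
        = ∑ b, f₀ X b * fderiv ℝ fi X (Pi.single b 1) c := by
      intro c
      rw [clm_apply_eq_sum_single (fderiv ℝ fi X) (f₀ X)]
      simp [Finset.sum_apply]
    have hzero : (∑ b, ((charF fi (γ s)).2 b * f₀ X b + P b * fderiv ℝ f₀ X (fi X) b)) = 0 := by
      rw [Finset.sum_add_distrib]
      have h1 : (∑ b, (charF fi (γ s)).2 b * f₀ X b)
          = -∑ c, P c * fderiv ℝ fi X (f₀ X) c := by
        simp only [charF, neg_mul, Finset.sum_neg_distrib, Finset.sum_mul]
        rw [Finset.sum_comm]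
        congr 1
        refine Finset.sum_congr rfl fun c _ => ?_
        rw [hA c, Finset.mul_sum]
        refine Finset.sum_congr rfl fun b _ => ?_
        ring
      rw [h1, hAB]
      ring
    rw [← hzero]
    convert hsum using 1
    rfl
  have hdiff : Differentiable ℝ (fun u => (γ u).2 ⬝ᵥ f₀ (γ u).1) :=
    fun s => (key s).differentiableAt
  exact is_const_of_deriv_eq_zero hdiff (fun s => (key s).deriv) t 0

lemma foldr_preserves {V : Type*} (H : V → ℝ) (L : List (V → V))
    (h : ∀ φ ∈ L, ∀ z, H (φ z) = H z) (z : V) :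
    H (L.foldr (fun φ z => φ z) z) = H z := by
  induction L with
  | nil => rfl
  | cons φ L ih =>
      simp only [List.foldr_cons]
      rw [h φ List.mem_cons_self, ih fun ψ hψ => h ψ (List.mem_cons_of_mem _ hψ)]

/-- let `f₀, f₁, …, f_m : ℝⁿ → ℝⁿ` be continuously
differentiable with `[f₀, fᵢ] ≡ 0` for `i = 1, …, m`. With
`H₀(x, p) = ⟨p, f₀(x)⟩`, the characteristic fields
`Zᵢ(x, p) = (fᵢ(x), −(Dfᵢ(x))ᵀ p)` and `gᵢ` a flow of `Zᵢ`, for every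
`z₀ = (x₀, p₀)` and every `λ = (t₁, …, t_m) ∈ ℝ^m` the composed orbit
`ẑ(λ, z₀) = g₁(t₁, g₂(t₂, …, g_m(t_m, z₀)…))` satisfies
`H₀(ẑ(λ, z₀)) = ⟨p₀, f₀(x₀)⟩`. -/
theorem stationary_solution_commuting_fields
    (n m : ℕ) (hn : 1 ≤ n) (hm : 1 ≤ m)
    (f₀ : (Fin n → ℝ) → Fin n → ℝ) (hf₀ : ContDiff ℝ 1 f₀)
    (f : Fin m → (Fin n → ℝ) → Fin n → ℝ) (hf : ∀ i, ContDiff ℝ 1 (f i))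
    (hcomm : ∀ i x, lieB f₀ (f i) x = 0)
    (g : Fin m → ℝ → ((Fin n → ℝ) × (Fin n → ℝ)) → (Fin n → ℝ) × (Fin n → ℝ))
    (hg0 : ∀ i y, g i 0 y = y)
    (hgflow : ∀ i t y, HasDerivAt (fun s => g i s y) (charF (f i) (g i t y)) t)
    (z₀ : (Fin n → ℝ) × (Fin n → ℝ)) (l : Fin m → ℝ) :
    (orbit g l z₀).2 ⬝ᵥ f₀ (orbit g l z₀).1 = z₀.2 ⬝ᵥ f₀ z₀.1 := by
  have := foldr_preserves (fun z => z.2 ⬝ᵥ f₀ z.1)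
    (List.ofFn fun i : Fin m => g i (l i)) ?_ z₀
  · exact this
  · intro φ hφ z
    rw [List.mem_ofFn] at hφ
    obtain ⟨i, rfl⟩ := hφ
    have h := H_const_along_flow f₀ (f i) hf₀ (hcomm i) (fun s => g i s z)
      (fun t => hgflow i t z) (l i)
    simpa [hg0 i z] using h
end
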